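/- Let X₁, X₂, X₃, ... be independent, identically distributed real-valued random variables and define the wave process W(ω,t) = X_{⌊t⌋}(ω)·sin(2πt) for t ≥ 0. Then for every Borel set B ⊆ ℝ, almost surely lim_{s→∞} (1/s)·m({t ∈ [0,s] : W(ω,t) ∈ B}) = E[m({t ∈ [0,1] : X₁·sin(2πt) ∈ B})], where m is Lebesgue measure. In particular, the wave process W has a limiting average occupation measure μ_W, i.e., W satisfies the wave steady-state assumption. -/

import Mathlib

open MeasureTheory Filter Set ProbabilityTheory
open scoped ENNReal Topology


noncomputable def waveOcc (B : Set ℝ) (x : ℝ) : ℝ≥0∞ :=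
  volume {t ∈ Set.Icc (0:ℝ) 1 | x * Real.sin (2 * Real.pi * t) ∈ B}

lemma waveOcc_le_one (B : Set ℝ) (x : ℝ) : waveOcc B x ≤ 1 := by
  refine (measure_mono (Set.sep_subset _ _)).trans ?_
  simp [Real.volume_Icc]

lemma measurableSet_wave (B : Set ℝ) (hB : MeasurableSet B) (x : ℝ) :
    MeasurableSet {t : ℝ | x * Real.sin (2 * Real.pi * t) ∈ B} :=
  (measurable_const.mul ((measurable_const.mul measurable_id).sin)) hB

lemma waveOcc_eq_restrict (B : Set ℝ) (hB : MeasurableSet B) (x : ℝ) :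
    waveOcc B x =
      (volume.restrict (Set.Icc (0:ℝ) 1)) {t | x * Real.sin (2 * Real.pi * t) ∈ B} := by
  rw [Measure.restrict_apply (measurableSet_wave B hB x)]
  unfold waveOcc
  congr 1
  ext t
  simp [and_comm]

lemma measurable_waveOcc (B : Set ℝ) (hB : MeasurableSet B) :
    Measurable (waveOcc B) := by
  have hs : MeasurableSet {p : ℝ × ℝ | p.1 * Real.sin (2 * Real.pi * p.2) ∈ B} :=
    (measurable_fst.mul ((measurable_const.mul measurable_snd).sin)) hB
  have h := measurable_measure_prodMk_left (ν := volume.restrict (Set.Icc (0:ℝ) 1)) hs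
  have : waveOcc B = fun x =>
      (volume.restrict (Set.Icc (0:ℝ) 1)) {t | x * Real.sin (2 * Real.pi * t) ∈ B} :=
    funext (waveOcc_eq_restrict B hB)
  rw [this]
  exact h

lemma waveOcc_Ico (B : Set ℝ) (x : ℝ) :
    volume {t ∈ Set.Ico (0:ℝ) 1 | x * Real.sin (2 * Real.pi * t) ∈ B} = waveOcc B x := by
  unfold waveOcc
  refine le_antisymm (measure_mono fun t ht => ⟨Set.Ico_subset_Icc_self ht.1, ht.2⟩) ?_
  have hsub : {t ∈ Set.Icc (0:ℝ) 1 | x * Real.sin (2 * Real.pi * t) ∈ B} ⊆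
      {t ∈ Set.Ico (0:ℝ) 1 | x * Real.sin (2 * Real.pi * t) ∈ B} ∪ {1} := by
    rintro t ⟨⟨h0, h1⟩, hp⟩
    rcases lt_or_eq_of_le h1 with h | h
    · exact Or.inl ⟨⟨h0, h⟩, hp⟩
    · exact Or.inr (by simp [h])
  refine (measure_mono hsub).trans ?_
  refine (measure_union_le _ _).trans ?_
  simp

lemma waveOcc_shift (B : Set ℝ) (x : ℝ) (j : ℕ) :
    volume {t ∈ Set.Ico (j:ℝ) (j+1) | x * Real.sin (2 * Real.pi * t) ∈ B} = waveOcc B x := by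
  rw [← waveOcc_Ico B x]
  have hpre : (fun u : ℝ => (j:ℝ) + u) ⁻¹'
        {t ∈ Set.Ico (j:ℝ) (j+1) | x * Real.sin (2 * Real.pi * t) ∈ B}
      = {t ∈ Set.Ico (0:ℝ) 1 | x * Real.sin (2 * Real.pi * t) ∈ B} := by
    ext u
    have hsin : Real.sin (2 * Real.pi * ((j:ℝ) + u)) = Real.sin (2 * Real.pi * u) := by
      have : 2 * Real.pi * ((j:ℝ) + u) = 2 * Real.pi * u + (j:ℝ) * (2 * Real.pi) := by ring
      rw [this, Real.sin_add_nat_mul_two_pi]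
    simp only [Set.mem_preimage, Set.mem_setOf_eq, Set.mem_Ico, hsin]
    constructor
    · rintro ⟨⟨h0, h1⟩, hp⟩; exact ⟨⟨by linarith, by linarith⟩, hp⟩
    · rintro ⟨⟨h0, h1⟩, hp⟩; exact ⟨⟨by linarith, by linarith⟩, hp⟩
  rw [← hpre, measure_preimage_add]

lemma measurableSet_waveFloor (B : Set ℝ) (hB : MeasurableSet B) (x : ℕ → ℝ) :
    MeasurableSet {t : ℝ | x ⌊t⌋₊ * Real.sin (2 * Real.pi * t) ∈ B} :=
  (((measurable_from_nat (f := x)).comp Nat.measurable_floor).mul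
    ((measurable_const.mul measurable_id).sin)) hB

lemma occ_sum (B : Set ℝ) (hB : MeasurableSet B) (x : ℕ → ℝ) (n : ℕ) :
    volume {t ∈ Set.Ico (0:ℝ) (n:ℝ) | x ⌊t⌋₊ * Real.sin (2 * Real.pi * t) ∈ B}
      = ∑ j ∈ Finset.range n, waveOcc B (x j) := by
  induction n with
  | zero => simp
  | succ n ih =>
    have hsplit : {t ∈ Set.Ico (0:ℝ) ((n:ℝ)+1) | x ⌊t⌋₊ * Real.sin (2 * Real.pi * t) ∈ B}
        = {t ∈ Set.Ico (0:ℝ) (n:ℝ) | x ⌊t⌋₊ * Real.sin (2 * Real.pi * t) ∈ B}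
          ∪ {t ∈ Set.Ico (n:ℝ) ((n:ℝ)+1) | x ⌊t⌋₊ * Real.sin (2 * Real.pi * t) ∈ B} := by
      ext t
      simp only [Set.mem_setOf_eq, Set.mem_union, Set.mem_Ico]
      constructor
      · rintro ⟨⟨h0, h1⟩, hp⟩
        rcases lt_or_ge t (n:ℝ) with h | h
        · exact Or.inl ⟨⟨h0, h⟩, hp⟩
        · exact Or.inr ⟨⟨h, h1⟩, hp⟩
      · rintro (⟨⟨h0, h1⟩, hp⟩ | ⟨⟨h0, h1⟩, hp⟩)
        · exact ⟨⟨h0, by linarith⟩, hp⟩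
        · exact ⟨⟨le_trans (Nat.cast_nonneg n) h0, h1⟩, hp⟩
    have hdisj : Disjoint
        {t ∈ Set.Ico (0:ℝ) (n:ℝ) | x ⌊t⌋₊ * Real.sin (2 * Real.pi * t) ∈ B}
        {t ∈ Set.Ico (n:ℝ) ((n:ℝ)+1) | x ⌊t⌋₊ * Real.sin (2 * Real.pi * t) ∈ B} := by
      refine Set.disjoint_left.2 ?_
      rintro t ⟨⟨_, h1⟩, _⟩ ⟨⟨h2, _⟩, _⟩
      exact absurd h2 (not_le.2 h1)
    have hmeas2 : MeasurableSet
        {t ∈ Set.Ico (n:ℝ) ((n:ℝ)+1) | x ⌊t⌋₊ * Real.sin (2 * Real.pi * t) ∈ B} := by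
      have : {t ∈ Set.Ico (n:ℝ) ((n:ℝ)+1) | x ⌊t⌋₊ * Real.sin (2 * Real.pi * t) ∈ B}
          = Set.Ico (n:ℝ) ((n:ℝ)+1) ∩ {t | x ⌊t⌋₊ * Real.sin (2 * Real.pi * t) ∈ B} := by
        ext t; simp [Set.mem_sep_iff, Set.mem_inter_iff]
      rw [this]
      exact measurableSet_Ico.inter (measurableSet_waveFloor B hB x)
    have hlast : {t ∈ Set.Ico (n:ℝ) ((n:ℝ)+1) | x ⌊t⌋₊ * Real.sin (2 * Real.pi * t) ∈ B}
        = {t ∈ Set.Ico (n:ℝ) ((n:ℝ)+1) | x n * Real.sin (2 * Real.pi * t) ∈ B} := by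
      ext t
      simp only [Set.mem_setOf_eq, Set.mem_Ico]
      constructor
      · rintro ⟨ht, hp⟩
        rw [Nat.floor_eq_on_Ico n t ht] at hp
        exact ⟨ht, hp⟩
      · rintro ⟨ht, hp⟩
        rw [Nat.floor_eq_on_Ico n t ht]
        exact ⟨ht, hp⟩
    push_cast
    rw [hsplit, measure_union hdisj hmeas2, ih, hlast, waveOcc_shift B (x n) n,
      Finset.sum_range_succ]

lemma occ_lower (B : Set ℝ) (hB : MeasurableSet B) (x : ℕ → ℝ) {n : ℕ} {s : ℝ}
    (hns : (n:ℝ) ≤ s) :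
    ∑ j ∈ Finset.range n, waveOcc B (x j)
      ≤ volume {t ∈ Set.Icc (0:ℝ) s | x ⌊t⌋₊ * Real.sin (2 * Real.pi * t) ∈ B} := by
  rw [← occ_sum B hB x n]
  refine measure_mono ?_
  rintro t ⟨⟨h0, h1⟩, hp⟩
  exact ⟨⟨h0, le_trans h1.le hns⟩, hp⟩

lemma occ_upper (B : Set ℝ) (hB : MeasurableSet B) (x : ℕ → ℝ) {n : ℕ} {s : ℝ}
    (hsn : s ≤ (n:ℝ)) :
    volume {t ∈ Set.Icc (0:ℝ) s | x ⌊t⌋₊ * Real.sin (2 * Real.pi * t) ∈ B}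
      ≤ ∑ j ∈ Finset.range n, waveOcc B (x j) := by
  rw [← occ_sum B hB x n]
  have hsub : {t ∈ Set.Icc (0:ℝ) s | x ⌊t⌋₊ * Real.sin (2 * Real.pi * t) ∈ B}
      ⊆ {t ∈ Set.Ico (0:ℝ) (n:ℝ) | x ⌊t⌋₊ * Real.sin (2 * Real.pi * t) ∈ B} ∪ {(n:ℝ)} := by
    rintro t ⟨⟨h0, h1⟩, hp⟩
    rcases lt_or_eq_of_le (le_trans h1 hsn) with h | h
    · exact Or.inl ⟨⟨h0, h⟩, hp⟩
    · exact Or.inr (by simp [h])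
  refine (measure_mono hsub).trans ?_
  refine (measure_union_le _ _).trans ?_
  simp

lemma occ_sum_lt_top (B : Set ℝ) (x : ℕ → ℝ) (n : ℕ) :
    ∑ j ∈ Finset.range n, waveOcc B (x j) ≠ ∞ := by
  refine ne_top_of_le_ne_top (b := (n : ℝ≥0∞)) ?_ ?_
  · exact ENNReal.natCast_ne_top n
  · calc ∑ j ∈ Finset.range n, waveOcc B (x j) ≤ ∑ _j ∈ Finset.range n, 1 :=
        Finset.sum_le_sum fun j _ => waveOcc_le_one B (x j)
    _ = (n : ℝ≥0∞) := by simp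

lemma occ_vol_ne_top (B : Set ℝ) (x : ℕ → ℝ) (s : ℝ) :
    volume {t ∈ Set.Icc (0:ℝ) s | x ⌊t⌋₊ * Real.sin (2 * Real.pi * t) ∈ B} ≠ ∞ := by
  refine ne_top_of_le_ne_top ?_ (measure_mono (Set.sep_subset _ _))
  simp [Real.volume_Icc]

lemma sum_toReal_eq (B : Set ℝ) (x : ℕ → ℝ) (n : ℕ) :
    (∑ j ∈ Finset.range n, waveOcc B (x j)).toReal
      = ∑ j ∈ Finset.range n, (waveOcc B (x j)).toReal :=
  ENNReal.toReal_sum fun j _ => ne_top_of_le_ne_top ENNReal.one_ne_top (waveOcc_le_one B (x j))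

lemma squeeze_main (B : Set ℝ) (hB : MeasurableSet B) (x : ℕ → ℝ) (L : ℝ)
    (hn : Tendsto (fun n : ℕ =>
        (∑ j ∈ Finset.range n, (waveOcc B (x j)).toReal) / n) atTop (𝓝 L)) :
    Tendsto (fun s : ℝ =>
        (volume {t ∈ Set.Icc (0:ℝ) s | x ⌊t⌋₊ * Real.sin (2 * Real.pi * t) ∈ B}).toReal / s)
      atTop (𝓝 L) := by
  set Y : ℕ → ℝ := fun j => (waveOcc B (x j)).toReal with hY
  set g : ℝ → ℝ := fun s =>
    (volume {t ∈ Set.Icc (0:ℝ) s | x ⌊t⌋₊ * Real.sin (2 * Real.pi * t) ∈ B}).toReal with hg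
  have hYnonneg : ∀ j, 0 ≤ Y j := fun j => ENNReal.toReal_nonneg
  have hSnonneg : ∀ n : ℕ, 0 ≤ ∑ j ∈ Finset.range n, Y j :=
    fun n => Finset.sum_nonneg fun j _ => hYnonneg j
  have hgnonneg : ∀ s, 0 ≤ g s := fun s => ENNReal.toReal_nonneg
  -- real-valued bounds
  have hlow : ∀ (n : ℕ) (s : ℝ), (n:ℝ) ≤ s → ∑ j ∈ Finset.range n, Y j ≤ g s := by
    intro n s hns
    rw [hY, ← sum_toReal_eq]
    exact ENNReal.toReal_le_toReal (occ_sum_lt_top B x n) (occ_vol_ne_top B x s) |>.2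
      (occ_lower B hB x hns)
  have hup : ∀ (n : ℕ) (s : ℝ), s ≤ (n:ℝ) → g s ≤ ∑ j ∈ Finset.range n, Y j := by
    intro n s hsn
    rw [hY, ← sum_toReal_eq]
    exact ENNReal.toReal_le_toReal (occ_vol_ne_top B x s) (occ_sum_lt_top B x n) |>.2
      (occ_upper B hB x hsn)
  -- the two auxiliary sequences
  have hA : Tendsto (fun n : ℕ => (∑ j ∈ Finset.range n, Y j) / ((n:ℝ) + 1)) atTop (𝓝 L) := by
    have h1 : Tendsto (fun n : ℕ => (n : ℝ) / ((n:ℝ) + 1)) atTop (𝓝 1) :=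
      tendsto_natCast_div_add_atTop (1 : ℝ)
    have := hn.mul h1
    rw [mul_one] at this
    refine this.congr fun n => ?_
    rcases Nat.eq_zero_or_pos n with h | h
    · simp [h]
    · have hn0 : (n:ℝ) ≠ 0 := Nat.cast_ne_zero.2 h.ne'
      field_simp
  have hBt : Tendsto (fun n : ℕ => (∑ j ∈ Finset.range (n+1), Y j) / (n:ℝ)) atTop (𝓝 L) := by
    have h1 : Tendsto (fun n : ℕ => ((n:ℝ) + 1) / (n:ℝ)) atTop (𝓝 1) := by
      have h2 : Tendsto (fun n : ℕ => 1 + 1 / (n:ℝ)) atTop (𝓝 (1 + 0)) :=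
        tendsto_const_nhds.add tendsto_one_div_atTop_nhds_zero_nat
      rw [add_zero] at h2
      refine h2.congr' ?_
      filter_upwards [eventually_ge_atTop 1] with n hn1
      have hn0 : (n:ℝ) ≠ 0 := Nat.cast_ne_zero.2 (by omega)
      field_simp
    have h3 : Tendsto (fun n : ℕ => (∑ j ∈ Finset.range (n+1), Y j) / ((n:ℝ)+1)) atTop (𝓝 L) := by
      have := hn.comp (tendsto_add_atTop_nat 1)
      refine this.congr fun n => ?_
      simp [Function.comp, Nat.cast_add]
    have := h3.mul h1
    rw [mul_one] at this
    refine this.congr fun n => ?_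
    rcases Nat.eq_zero_or_pos n with h | h
    · simp [h]
    · have hn0 : (n:ℝ) ≠ 0 := Nat.cast_ne_zero.2 h.ne'
      have hn1 : (n:ℝ) + 1 ≠ 0 := by positivity
      field_simp
  -- compose with floor
  have hlo : Tendsto (fun s : ℝ =>
      (∑ j ∈ Finset.range ⌊s⌋₊, Y j) / ((⌊s⌋₊:ℝ) + 1)) atTop (𝓝 L) :=
    hA.comp tendsto_nat_floor_atTop
  have hhi : Tendsto (fun s : ℝ =>
      (∑ j ∈ Finset.range (⌊s⌋₊+1), Y j) / (⌊s⌋₊:ℝ)) atTop (𝓝 L) :=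
    hBt.comp tendsto_nat_floor_atTop
  refine tendsto_of_tendsto_of_tendsto_of_le_of_le' hlo hhi ?_ ?_
  · filter_upwards [eventually_ge_atTop (1:ℝ)] with s hs1
    have hs0 : (0:ℝ) ≤ s := by linarith
    have hfl : (⌊s⌋₊:ℝ) ≤ s := Nat.floor_le hs0
    have hsl : s < (⌊s⌋₊:ℝ) + 1 := Nat.lt_floor_add_one s
    have hspos : 0 < s := by linarith
    refine div_le_div₀ (hgnonneg s) (hlow ⌊s⌋₊ s hfl) hspos hsl.le
  · filter_upwards [eventually_ge_atTop (1:ℝ)] with s hs1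
    have hs0 : (0:ℝ) ≤ s := by linarith
    have hfl : (⌊s⌋₊:ℝ) ≤ s := Nat.floor_le hs0
    have hsl : s < (⌊s⌋₊:ℝ) + 1 := Nat.lt_floor_add_one s
    have hn1 : 1 ≤ ⌊s⌋₊ := Nat.le_floor (by exact_mod_cast hs1)
    have hnpos : (0:ℝ) < (⌊s⌋₊:ℝ) := by exact_mod_cast Nat.lt_of_lt_of_le Nat.zero_lt_one hn1
    refine div_le_div₀ (hSnonneg _) (hup (⌊s⌋₊+1) s (by push_cast; linarith)) hnpos hfl

/-- For i.i.d. wave crest heights `X₁, X₂, …`, the wave process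
`W(ω,t) = X_{⌊t⌋}(ω) · sin(2πt)` has, for every Borel set `B ⊆ ℝ`, almost surely a limiting
average occupation time equal to `E[m({t ∈ [0,1] : X₁·sin(2πt) ∈ B})]`.  In particular `W`
has a limiting average occupation measure `μ_W`, i.e. it satisfies the wave steady-state
assumption. -/
theorem wave_process_steady_state
    {Ω : Type*} [MeasurableSpace Ω] (P : Measure Ω) [IsProbabilityMeasure P]
    (X : ℕ → Ω → ℝ) (hmeas : ∀ j, Measurable (X j))
    (hindep : iIndepFun X P)
    (hident : ∀ j, IdentDistrib (X j) (X 1) P P) :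
    (∀ B : Set ℝ, MeasurableSet B →
      ∀ᵐ ω ∂P, Tendsto
        (fun s : ℝ =>
          (volume {t ∈ Set.Icc (0 : ℝ) s | X ⌊t⌋₊ ω * Real.sin (2 * Real.pi * t) ∈ B}).toReal
            / s)
        atTop
        (nhds (∫ ω', (volume {t ∈ Set.Icc (0 : ℝ) 1 |
            X 1 ω' * Real.sin (2 * Real.pi * t) ∈ B}).toReal ∂P))) ∧
    ∃ μW : Measure ℝ, IsProbabilityMeasure μW ∧
      ∀ B : Set ℝ, MeasurableSet B →
        ∀ᵐ ω ∂P, Tendsto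
          (fun s : ℝ =>
            (volume {t ∈ Set.Icc (0 : ℝ) s | X ⌊t⌋₊ ω * Real.sin (2 * Real.pi * t) ∈ B}).toReal
              / s)
          atTop (nhds (μW B).toReal) := by
  have main : ∀ B : Set ℝ, MeasurableSet B →
      ∀ᵐ ω ∂P, Tendsto
        (fun s : ℝ =>
          (volume {t ∈ Set.Icc (0 : ℝ) s | X ⌊t⌋₊ ω * Real.sin (2 * Real.pi * t) ∈ B}).toReal
            / s)
        atTop (𝓝 (∫ ω', (waveOcc B (X 1 ω')).toReal ∂P)) := by
    intro B hB
    set F : ℝ → ℝ := fun x => (waveOcc B x).toReal with hF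
    have Fm : Measurable F := (measurable_waveOcc B hB).ennreal_toReal
    have Fle : ∀ x, F x ≤ 1 := by
      intro x
      simpa using ENNReal.toReal_mono ENNReal.one_ne_top (waveOcc_le_one B x)
    set Z : ℕ → Ω → ℝ := fun j ω => F (X j ω) with hZ
    have hint : Integrable (Z 0) P := by
      refine (integrable_const (1:ℝ)).mono' ((Fm.comp (hmeas 0)).aestronglyMeasurable) ?_
      refine ae_of_all _ fun ω => ?_
      rw [Real.norm_eq_abs, abs_of_nonneg ENNReal.toReal_nonneg]
      exact Fle _
    have hind : Pairwise (Function.onFun (IndepFun · · P) Z) :=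
      fun i j hij => (hindep.indepFun hij).comp Fm Fm
    have hid : ∀ i, IdentDistrib (Z i) (Z 0) P P :=
      fun i => ((hident i).trans (hident 0).symm).comp Fm
    have slln := strong_law_ae_real Z hint hind hid
    have hEq : P[Z 0] = ∫ ω', (waveOcc B (X 1 ω')).toReal ∂P :=
      ((hident 0).comp Fm).integral_eq
    rw [hEq] at slln
    filter_upwards [slln] with ω hω
    exact squeeze_main B hB (fun j => X j ω) _ hω
  constructor
  · intro B hB
    exact main B hB
  · haveI : IsProbabilityMeasure (volume.restrict (Set.Icc (0:ℝ) 1)) :=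
      ⟨by simp [Real.volume_Icc]⟩
    have mmeas : Measurable fun p : Ω × ℝ => X 1 p.1 * Real.sin (2 * Real.pi * p.2) :=
      ((hmeas 1).comp measurable_fst).mul ((measurable_const.mul measurable_snd).sin)
    refine ⟨Measure.map (fun p : Ω × ℝ => X 1 p.1 * Real.sin (2 * Real.pi * p.2))
        (P.prod (volume.restrict (Set.Icc (0:ℝ) 1))),
      Measure.isProbabilityMeasure_map mmeas.aemeasurable, ?_⟩
    intro B hB
    have key : ((Measure.map (fun p : Ω × ℝ => X 1 p.1 * Real.sin (2 * Real.pi * p.2))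
        (P.prod (volume.restrict (Set.Icc (0:ℝ) 1)))) B).toReal
        = ∫ ω', (waveOcc B (X 1 ω')).toReal ∂P := by
      rw [Measure.map_apply mmeas hB, Measure.prod_apply (mmeas hB)]
      have h1 : ∀ ω, (volume.restrict (Set.Icc (0:ℝ) 1))
          (Prod.mk ω ⁻¹' ((fun p : Ω × ℝ => X 1 p.1 * Real.sin (2 * Real.pi * p.2)) ⁻¹' B))
          = waveOcc B (X 1 ω) := by
        intro ω
        rw [waveOcc_eq_restrict B hB]
        rfl
      rw [lintegral_congr h1]
      exact (integral_toReal (((measurable_waveOcc B hB).comp (hmeas 1)).aemeasurable)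
        (ae_of_all _ fun ω => lt_of_le_of_lt (waveOcc_le_one B (X 1 ω)) ENNReal.one_lt_top)).symm
    rw [key]
    exact main B hB
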